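/- Let G and H be finite simple graphs such that both the Cartesian product G□H and the lexicographic product G[H] are connected and each has at least one edge. Then G□H is strongly edge-balanced if and only if G[H] is strongly edge-balanced. -/

import Mathlib

open SimpleGraph

/-- The lexicographic product (composition) `G[H]`. -/
def lexProd {α β : Type*} (G : SimpleGraph α) (H : SimpleGraph β) :
    SimpleGraph (α × β) where
  Adj x y := G.Adj x.1 y.1 ∨ (x.1 = y.1 ∧ H.Adj x.2 y.2)
  symm := ⟨fun x y h =>
    h.elim (fun h' => Or.inl h'.symm) (fun ⟨he, h2⟩ => Or.inr ⟨he.symm, h2.symm⟩)⟩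
  loopless := ⟨fun x h =>
    h.elim (G.loopless.irrefl x.1) (fun ⟨_, h2⟩ => H.loopless.irrefl x.2 h2)⟩

/-- The direct (tensor, Kronecker) product `G × H`. -/
def tensorProd {α β : Type*} (G : SimpleGraph α) (H : SimpleGraph β) :
    SimpleGraph (α × β) where
  Adj x y := G.Adj x.1 y.1 ∧ H.Adj x.2 y.2
  symm := ⟨fun _ _ ⟨h1, h2⟩ => ⟨h1.symm, h2.symm⟩⟩
  loopless := ⟨fun x h => G.loopless.irrefl x.1 h.1⟩

/-- The number of edges labeled `i` by the edge labeling `f`. -/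
noncomputable def edgeCount {V : Type*} (G : SimpleGraph V) (f : G.edgeSet → ZMod 2) (i : ZMod 2) : ℕ :=
  Nat.card {e : G.edgeSet // f e = i}

/-- The number of edges incident to `v` that are labeled `i` (the `i`-degree of `v`). -/
noncomputable def labDeg {V : Type*} (G : SimpleGraph V) (f : G.edgeSet → ZMod 2) (i : ZMod 2) (v : V) : ℕ :=
  Nat.card {e : G.edgeSet // f e = i ∧ v ∈ (e : Sym2 V)}

/-- The number of vertices whose induced (partial) label is `i`: those incident to strictly
more `i`-edges than `(1-i)`-edges. -/
noncomputable def vertexCount {V : Type*} (G : SimpleGraph V) (f : G.edgeSet → ZMod 2) (i : ZMod 2) : ℕ :=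
  Nat.card {v : V // labDeg G f (1 - i) v < labDeg G f i v}

/-- An edge labeling (a surjective function onto `ZMod 2`) is edge-friendly if
`|e_f(0) - e_f(1)| ≤ 1`. -/
def EdgeFriendly {V : Type*} (G : SimpleGraph V) (f : G.edgeSet → ZMod 2) : Prop :=
  Function.Surjective f ∧ |(edgeCount G f 0 : ℤ) - (edgeCount G f 1 : ℤ)| ≤ 1

/-- A graph is strongly edge-balanced if some edge-friendly labeling `f` satisfies
`v_f(0) = v_f(1)` and `e_f(0) = e_f(1)`. -/
def StronglyEdgeBalanced {V : Type*} (G : SimpleGraph V) : Prop :=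
  ∃ f : G.edgeSet → ZMod 2, EdgeFriendly G f ∧
    vertexCount G f 0 = vertexCount G f 1 ∧ edgeCount G f 0 = edgeCount G f 1

private lemma pick_aux {V : Type*} [DecidableEq V] (v : V) (p : V × V × V)
    (hp : p.2.1 = v ∨ p.2.2 = v) :
    ((p.1, (if p.2.1 = v then p.2.2 else p.2.1), v) = p ∨
      (p.1, (if p.2.1 = v then p.2.2 else p.2.1), v) = (p.1, p.2.2, p.2.1)) ∧
    ((p.1, v, (if p.2.1 = v then p.2.2 else p.2.1)) = p ∨
      (p.1, v, (if p.2.1 = v then p.2.2 else p.2.1)) = (p.1, p.2.2, p.2.1)) := by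
  obtain ⟨c, x, y⟩ := p
  by_cases h : x = v
  · subst h; simp
  · simp only at hp
    rcases hp with h' | h'
    · exact absurd h' h
    · subst h'; simp [h]

private lemma orient {V : Type*} [DecidableEq V] (m : Multiset (V × V × V)) :
    ∃ m' : Multiset (V × V × V),
      Multiset.Rel (fun p q => q = p ∨ q = (p.1, p.2.2, p.2.1)) m m' ∧
      ∀ v : V,
        ((m'.map (fun t => t.2.1)).count v : ℤ) - ((m'.map (fun t => t.2.2)).count v : ℤ) ≤ 1 ∧
        ((m'.map (fun t => t.2.2)).count v : ℤ) - ((m'.map (fun t => t.2.1)).count v : ℤ) ≤ 1 := by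
  suffices H : ∀ (n : ℕ) (m : Multiset (V × V × V)), Multiset.card m = n →
      ∃ m' : Multiset (V × V × V),
      Multiset.Rel (fun p q => q = p ∨ q = (p.1, p.2.2, p.2.1)) m m' ∧
      ∀ v : V,
        ((m'.map (fun t => t.2.1)).count v : ℤ) - ((m'.map (fun t => t.2.2)).count v : ℤ) ≤ 1 ∧
        ((m'.map (fun t => t.2.2)).count v : ℤ) - ((m'.map (fun t => t.2.1)).count v : ℤ) ≤ 1 by
    exact H _ m rfl
  intro n
  induction n using Nat.strong_induction_on with
  | _ n ih =>
    intro m hcard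
    by_cases hex : ∃ v : V, 2 ≤ Multiset.card (m.filter (fun p => p.2.1 = v ∨ p.2.2 = v))
    · obtain ⟨v, hv⟩ := hex
      have h1 : ∃ p₁, p₁ ∈ m.filter (fun p => p.2.1 = v ∨ p.2.2 = v) := by
        rw [← Multiset.card_pos_iff_exists_mem]; omega
      obtain ⟨p₁, hp₁f⟩ := h1
      rw [Multiset.mem_filter] at hp₁f
      obtain ⟨hp₁m, hp₁v⟩ := hp₁f
      obtain ⟨m₁, hm₁⟩ := Multiset.exists_cons_of_mem hp₁m
      have h2 : ∃ p₂, p₂ ∈ m₁.filter (fun p => p.2.1 = v ∨ p.2.2 = v) := by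
        rw [← Multiset.card_pos_iff_exists_mem]
        have heq : m.filter (fun p => p.2.1 = v ∨ p.2.2 = v)
            = p₁ ::ₘ m₁.filter (fun p => p.2.1 = v ∨ p.2.2 = v) := by
          rw [hm₁]; exact Multiset.filter_cons_of_pos _ hp₁v
        rw [heq] at hv
        simp at hv; omega
      obtain ⟨p₂, hp₂f⟩ := h2
      rw [Multiset.mem_filter] at hp₂f
      obtain ⟨hp₂m, hp₂v⟩ := hp₂f
      obtain ⟨m₂, hm₂⟩ := Multiset.exists_cons_of_mem hp₂m
      set a := if p₁.2.1 = v then p₁.2.2 else p₁.2.1 with ha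
      set b := if p₂.2.1 = v then p₂.2.2 else p₂.2.1 with hb
      have hcard' : Multiset.card ((v, a, b) ::ₘ m₂) = n - 1 := by
        rw [hm₁, hm₂] at hcard; simp at hcard ⊢; omega
      have hlt : n - 1 < n := by
        rw [hm₁, hm₂] at hcard; simp at hcard; omega
      obtain ⟨m'', hrel, hbound⟩ := ih (n-1) hlt _ hcard'
      rw [Multiset.rel_cons_left] at hrel
      obtain ⟨q, m₂', hq, hrel₂, hm''⟩ := hrel
      simp only at hq
      rcases hq with hq | hq
      · -- q = (v, a, b)
        refine ⟨(p₁.1, a, v) ::ₘ (p₂.1, v, b) ::ₘ m₂', ?_, ?_⟩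
        · rw [hm₁, hm₂]
          exact Multiset.Rel.cons (pick_aux v p₁ hp₁v).1
            (Multiset.Rel.cons (pick_aux v p₂ hp₂v).2 hrel₂)
        · intro x
          have hbx := hbound x
          rw [hm''] at hbx
          simp only [hq, Multiset.map_cons, Multiset.count_cons] at hbx ⊢
          push_cast at hbx ⊢
          split_ifs at hbx ⊢ <;> omega
      · -- q = (v, b, a)
        refine ⟨(p₁.1, v, a) ::ₘ (p₂.1, b, v) ::ₘ m₂', ?_, ?_⟩
        · rw [hm₁, hm₂]
          exact Multiset.Rel.cons (pick_aux v p₁ hp₁v).2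
            (Multiset.Rel.cons (pick_aux v p₂ hp₂v).1 hrel₂)
        · intro x
          have hbx := hbound x
          rw [hm''] at hbx
          simp only [hq, Multiset.map_cons, Multiset.count_cons] at hbx ⊢
          push_cast at hbx ⊢
          split_ifs at hbx ⊢ <;> omega
    · push_neg at hex
      refine ⟨m, Multiset.rel_refl_of_refl_on (fun p _ => Or.inl rfl), ?_⟩
      intro v
      have h1 : (m.map (fun t => t.2.1)).count v ≤ 1 := by
        rw [Multiset.count_map]
        calc Multiset.card (m.filter (fun t => v = t.2.1))
            ≤ Multiset.card (m.filter (fun p => p.2.1 = v ∨ p.2.2 = v)) := by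
              apply Multiset.card_le_card
              apply Multiset.monotone_filter_right
              intro p hp; exact Or.inl hp.symm
          _ ≤ 1 := by have := hex v; omega
      have h2 : (m.map (fun t => t.2.2)).count v ≤ 1 := by
        rw [Multiset.count_map]
        calc Multiset.card (m.filter (fun t => v = t.2.2))
            ≤ Multiset.card (m.filter (fun p => p.2.1 = v ∨ p.2.2 = v)) := by
              apply Multiset.card_le_card
              apply Multiset.monotone_filter_right
              intro p hp; exact Or.inr hp.symm
          _ ≤ 1 := by have := hex v; omega
      omega
private def Reach {V : Type*} (s : Finset (Sym2 V)) (a b : V) : Prop :=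
  Relation.ReflTransGen (fun x y => s(x, y) ∈ s) a b

private lemma reach_symm {V : Type*} {s : Finset (Sym2 V)} {a b : V}
    (h : Reach s a b) : Reach s b a := by
  have hs : Std.Symm (fun x y : V => s(x, y) ∈ s) := by
    refine ⟨?_⟩
    intro x y hxy
    rwa [Sym2.eq_swap] at hxy
  exact Std.Symm.symm (r := Relation.ReflTransGen (fun x y : V => s(x, y) ∈ s)) a b h

private lemma reach_trans {V : Type*} {s : Finset (Sym2 V)} {a b c : V}
    (h : Reach s a b) (h' : Reach s b c) : Reach s a c := h.trans h'

private lemma pairing {V : Type*} [DecidableEq V] :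
    ∀ (n : ℕ) (s : Finset (Sym2 V)), s.card = n →
    (∀ e ∈ s, ¬ e.IsDiag) →
    (∀ (a b : V), (∃ e ∈ s, a ∈ e) → (∃ f ∈ s, b ∈ f) → Reach s a b) →
    ∀ (u : V), (s.Nonempty → ∃ e ∈ s, u ∈ e) →
    ∃ (l : List (Sym2 V × Sym2 V)) (r : Multiset (Sym2 V)),
      ((l.map Prod.fst : Multiset _) + (l.map Prod.snd : Multiset _) + r) = s.val ∧
      (∀ p ∈ l, ∃ c, c ∈ p.1 ∧ c ∈ p.2) ∧
      (n % 2 = 0 → r = 0) ∧ (n % 2 = 1 → ∃ e₀, r = {e₀} ∧ u ∈ e₀) := by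
  intro n
  induction n using Nat.strong_induction_on with
  | _ n ih =>
    intro s hcard hdiag hconn u hu
    classical
    rcases Finset.eq_empty_or_nonempty s with hse | hse
    · subst hse
      refine ⟨[], 0, by simp, by simp, fun _ => rfl, fun h => by simp at hcard; omega⟩
    · obtain ⟨e, he, hue⟩ := hu hse
      obtain ⟨w, hew⟩ := Sym2.mem_iff_exists.mp hue
      subst hew
      have huw : u ≠ w := by
        intro h
        exact hdiag _ he (by rw [h]; exact Sym2.isDiag_iff_proj_eq |>.mpr rfl)
      set t := s.erase (s(u, w)) with ht
      have hmem_t : ∀ {f}, f ∈ t → f ∈ s := fun hf => Finset.mem_of_mem_erase hf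
      have htval : s(u, w) ::ₘ t.val = s.val := by
        rw [ht, Finset.erase_val]
        exact Multiset.cons_erase (by rwa [Finset.mem_def] at he)
      have htcard : t.card = n - 1 := by rw [ht, Finset.card_erase_of_mem he, hcard]
      have hn1 : 1 ≤ n := by
        rw [← hcard]; exact Finset.card_pos.mpr hse
      -- K1
      have K1 : ∀ a, Reach s a u → Reach t a u ∨ Reach t a w := by
        intro a h
        refine Relation.ReflTransGen.head_induction_on h (Or.inl Relation.ReflTransGen.refl) ?_
        intro a' c h' htail ihh
        · by_cases hec : s(a', c) = s(u, w)
          · rw [Sym2.eq_iff] at hec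
            rcases hec with ⟨h1, _⟩ | ⟨h1, _⟩
            · subst h1; exact Or.inl Relation.ReflTransGen.refl
            · subst h1; exact Or.inr Relation.ReflTransGen.refl
          · have h'' : s(a', c) ∈ t := Finset.mem_erase.mpr ⟨hec, h'⟩
            rcases ihh with hl | hl
            · exact Or.inl (Relation.ReflTransGen.head h'' hl)
            · exact Or.inr (Relation.ReflTransGen.head h'' hl)
      -- closure lemma
      have K3 : ∀ (x a : V), Reach t a x →
          Reach (t.filter (fun f => ∃ y ∈ f, Reach t y x)) a x := by
        intro x a h
        refine Relation.ReflTransGen.head_induction_on h Relation.ReflTransGen.refl ?_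
        intro a' c h' htail ihh
        have hcx : s(a', c) ∈ t.filter (fun f => ∃ y ∈ f, Reach t y x) :=
          Finset.mem_filter.mpr ⟨h', ⟨c, Sym2.mem_mk_right _ _, htail⟩⟩
        exact Relation.ReflTransGen.head hcx ihh
      -- pivot-edge lemma
      have K4 : ∀ (x a : V), Reach t a x → a = x ∨
          ∃ g ∈ t.filter (fun f => ∃ y ∈ f, Reach t y x), x ∈ g := by
        intro x a h
        rcases Relation.ReflTransGen.cases_tail h with h | ⟨c, _, hc⟩
        · exact Or.inl h.symm
        · refine Or.inr ⟨s(c, x), Finset.mem_filter.mpr ⟨hc, ⟨x, Sym2.mem_mk_right _ _,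
            Relation.ReflTransGen.refl⟩⟩, Sym2.mem_mk_right _ _⟩
      have hend_u : ∀ a, (∃ f ∈ t, a ∈ f) → Reach t a u ∨ Reach t a w := by
        intro a ⟨f, hf, haf⟩
        exact K1 a (hconn a u ⟨f, hmem_t hf, haf⟩ ⟨s(u, w), he, Sym2.mem_mk_left _ _⟩)
      by_cases hwu : Reach t w u
      · -- t is still connected
        have hconn_t : ∀ (a b : V), (∃ f ∈ t, a ∈ f) → (∃ f ∈ t, b ∈ f) → Reach t a b := by
          intro a b hA hB
          have hau : Reach t a u := by
            rcases hend_u a hA with h | h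
            · exact h
            · exact h.trans hwu
          have hbu : Reach t b u := by
            rcases hend_u b hB with h | h
            · exact h
            · exact h.trans hwu
          exact hau.trans (reach_symm hbu)
        have hpivot_t : t.Nonempty → ∃ f ∈ t, w ∈ f := by
          intro _
          rcases Relation.ReflTransGen.cases_head hwu with h | ⟨c, hc, _⟩
          · exact absurd h (Ne.symm huw)
          · exact ⟨s(w, c), hc, Sym2.mem_mk_left _ _⟩
        obtain ⟨l', r', hsum, hshare, hev, hodd⟩ :=
          ih (n - 1) (by omega) t htcard (fun f hf => hdiag f (hmem_t hf)) hconn_t w hpivot_t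
        by_cases hpar : n % 2 = 0
        · -- n even, n-1 odd: leftover pairs with e
          obtain ⟨f, hrf, hwf⟩ := hodd (by omega)
          refine ⟨(s(u, w), f) :: l', 0, ?_, ?_, fun _ => rfl, fun h => by omega⟩
          · rw [← htval, ← hsum, hrf]
            simp only [List.map_cons]
            simp only [← Multiset.cons_coe, ← Multiset.coe_add, ← Multiset.singleton_add]
            abel
          · intro p hp
            rcases List.mem_cons.mp hp with hp | hp
            · subst hp; exact ⟨w, Sym2.mem_mk_right _ _, hwf⟩
            · exact hshare p hp
        · -- n odd: leftover is e at u
          have hr0 : r' = 0 := hev (by omega)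
          refine ⟨l', {s(u, w)}, ?_, hshare, fun h => by omega,
            fun _ => ⟨s(u, w), rfl, Sym2.mem_mk_left _ _⟩⟩
          rw [← htval, ← hsum, hr0]
          simp only [← Multiset.cons_coe, ← Multiset.coe_add, ← Multiset.singleton_add]
          abel
      · -- t splits into two components
        set Cu := t.filter (fun f => ∃ y ∈ f, Reach t y u) with hCu
        set Cw := t.filter (fun f => ∃ y ∈ f, Reach t y w) with hCw
        have hboth : ∀ {f x y}, f ∈ t → x ∈ f → y ∈ f → Reach t x y := by
          intro f x y hf hx hy
          rcases eq_or_ne x y with h | h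
          · rw [h]; exact Relation.ReflTransGen.refl
          · have : f = s(x, y) := (Sym2.mem_and_mem_iff h).mp ⟨hx, hy⟩
            exact Relation.ReflTransGen.single (this ▸ hf)
        have hdisj : Disjoint Cu Cw := by
          rw [Finset.disjoint_left]
          intro f hfu hfw
          obtain ⟨x, hx, hxu⟩ := Finset.mem_filter.mp hfu |>.2
          obtain ⟨y, hy, hyw⟩ := Finset.mem_filter.mp hfw |>.2
          have hft : f ∈ t := Finset.mem_filter.mp hfu |>.1
          exact hwu ((reach_symm hyw).trans ((hboth hft hy hx).trans hxu))
        have hcover : ∀ f ∈ t, f ∈ Cu ∨ f ∈ Cw := by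
          intro f hf
          have hxf : ∃ x, x ∈ f := ⟨f.out.1, Sym2.out_fst_mem f⟩
          obtain ⟨x, hx⟩ := hxf
          rcases hend_u x ⟨f, hf, hx⟩ with h | h
          · exact Or.inl (Finset.mem_filter.mpr ⟨hf, x, hx, h⟩)
          · exact Or.inr (Finset.mem_filter.mpr ⟨hf, x, hx, h⟩)
        have hunion : t = Cu.disjUnion Cw hdisj := by
          apply Finset.ext
          intro f
          simp only [Finset.mem_disjUnion]
          constructor
          · exact hcover f
          · rintro (h | h)
            · exact Finset.mem_filter.mp h |>.1
            · exact Finset.mem_filter.mp h |>.1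
        have hvalsplit : Cu.val + Cw.val = t.val := by
          rw [hunion]; rfl
        have hcards : Cu.card + Cw.card = n - 1 := by
          rw [← htcard, hunion]; exact (Finset.card_disjUnion _ _ _).symm
        -- connectivity of the parts
        have hconn_part : ∀ (x : V) (C : Finset (Sym2 V)),
            C = t.filter (fun f => ∃ y ∈ f, Reach t y x) →
            ∀ (a b : V), (∃ f ∈ C, a ∈ f) → (∃ f ∈ C, b ∈ f) → Reach C a b := by
          intro x C hC a b ⟨f, hf, haf⟩ ⟨g, hg, hbg⟩
          rw [hC] at hf hg
          obtain ⟨x₀, hx₀, hx₀u⟩ := Finset.mem_filter.mp hf |>.2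
          obtain ⟨y₀, hy₀, hy₀u⟩ := Finset.mem_filter.mp hg |>.2
          have hft : f ∈ t := Finset.mem_filter.mp hf |>.1
          have hgt : g ∈ t := Finset.mem_filter.mp hg |>.1
          have hax : Reach t a x := (hboth hft haf hx₀).trans hx₀u
          have hbx : Reach t b x := (hboth hgt hbg hy₀).trans hy₀u
          rw [hC]
          exact (K3 x a hax).trans (reach_symm (K3 x b hbx))
        have hpivot_part : ∀ (x : V) (C : Finset (Sym2 V)),
            C = t.filter (fun f => ∃ y ∈ f, Reach t y x) →
            C.Nonempty → ∃ g ∈ C, x ∈ g := by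
          intro x C hC ⟨f, hf⟩
          rw [hC] at hf
          obtain ⟨x₀, hx₀, hx₀x⟩ := Finset.mem_filter.mp hf |>.2
          rcases K4 x x₀ hx₀x with h | ⟨g, hg, hxg⟩
          · exact ⟨f, by rwa [hC], by rwa [← h]⟩
          · exact ⟨g, by rwa [hC], hxg⟩
        obtain ⟨l₁, r₁, hsum₁, hshare₁, hev₁, hodd₁⟩ :=
          ih Cu.card (by omega) Cu rfl
            (fun f hf => hdiag f (hmem_t (Finset.mem_filter.mp hf |>.1)))
            (hconn_part u Cu hCu) u (hpivot_part u Cu hCu)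
        obtain ⟨l₂, r₂, hsum₂, hshare₂, hev₂, hodd₂⟩ :=
          ih Cw.card (by omega) Cw rfl
            (fun f hf => hdiag f (hmem_t (Finset.mem_filter.mp hf |>.1)))
            (hconn_part w Cw hCw) w (hpivot_part w Cw hCw)
        have hsharecat : ∀ p ∈ l₁ ++ l₂, ∃ c, c ∈ p.1 ∧ c ∈ p.2 := by
          intro p hp
          rcases List.mem_append.mp hp with h | h
          · exact hshare₁ p h
          · exact hshare₂ p h
        by_cases hpar : n % 2 = 0
        · -- exactly one of the two components is odd
          rcases Nat.even_or_odd Cu.card with hcu | hcu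
          · -- Cu even, Cw odd
            have hr₁ : r₁ = 0 := hev₁ (Nat.even_iff.mp hcu)
            obtain ⟨g, hrg, hwg⟩ := hodd₂ (by
              have := Nat.even_iff.mp hcu; omega)
            refine ⟨(g, s(u, w)) :: (l₁ ++ l₂), 0, ?_, ?_, fun _ => rfl, fun h => by omega⟩
            · rw [← htval, ← hvalsplit, ← hsum₁, ← hsum₂, hr₁, hrg]
              simp only [List.map_cons, List.map_append]
              simp only [← Multiset.cons_coe, ← Multiset.coe_add, ← Multiset.singleton_add]
              abel
            · intro p hp
              rcases List.mem_cons.mp hp with hp | hp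
              · subst hp; exact ⟨w, hwg, Sym2.mem_mk_right _ _⟩
              · exact hsharecat p hp
          · -- Cu odd, Cw even
            obtain ⟨f, hrf, huf⟩ := hodd₁ (Nat.odd_iff.mp hcu)
            have hr₂ : r₂ = 0 := hev₂ (by have := Nat.odd_iff.mp hcu; omega)
            refine ⟨(f, s(u, w)) :: (l₁ ++ l₂), 0, ?_, ?_, fun _ => rfl, fun h => by omega⟩
            · rw [← htval, ← hvalsplit, ← hsum₁, ← hsum₂, hr₂, hrf]
              simp only [List.map_cons, List.map_append]
              simp only [← Multiset.cons_coe, ← Multiset.coe_add, ← Multiset.singleton_add]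
              abel
            · intro p hp
              rcases List.mem_cons.mp hp with hp | hp
              · subst hp; exact ⟨u, huf, Sym2.mem_mk_left _ _⟩
              · exact hsharecat p hp
        · -- n odd: components have equal parity
          rcases Nat.even_or_odd Cu.card with hcu | hcu
          · -- both even: leftover is e at u
            have hr₁ : r₁ = 0 := hev₁ (Nat.even_iff.mp hcu)
            have hr₂ : r₂ = 0 := hev₂ (by have := Nat.even_iff.mp hcu; omega)
            refine ⟨l₁ ++ l₂, {s(u, w)}, ?_, hsharecat, fun h => by omega,
              fun _ => ⟨s(u, w), rfl, Sym2.mem_mk_left _ _⟩⟩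
            rw [← htval, ← hvalsplit, ← hsum₁, ← hsum₂, hr₁, hr₂]
            simp only [List.map_append]
            simp only [← Multiset.cons_coe, ← Multiset.coe_add, ← Multiset.singleton_add]
            abel
          · -- both odd: pair Cw leftover with e; Cu leftover remains at u
            obtain ⟨f, hrf, huf⟩ := hodd₁ (Nat.odd_iff.mp hcu)
            obtain ⟨g, hrg, hwg⟩ := hodd₂ (by have := Nat.odd_iff.mp hcu; omega)
            refine ⟨(g, s(u, w)) :: (l₁ ++ l₂), {f}, ?_, ?_, fun h => by omega,
              fun _ => ⟨f, rfl, huf⟩⟩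
            · rw [← htval, ← hvalsplit, ← hsum₁, ← hsum₂, hrf, hrg]
              simp only [List.map_cons, List.map_append]
              simp only [← Multiset.cons_coe, ← Multiset.coe_add, ← Multiset.singleton_add]
              abel
            · intro p hp
              rcases List.mem_cons.mp hp with hp | hp
              · subst hp; exact ⟨w, hwg, Sym2.mem_mk_right _ _⟩
              · exact hsharecat p hp
private lemma even_card_of_invol {γ : Type*} [DecidableEq γ] (s : Finset γ) (j : γ → γ)
    (h1 : ∀ x ∈ s, j x ∈ s) (h2 : ∀ x ∈ s, j (j x) = x) (h3 : ∀ x ∈ s, j x ≠ x) :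
    Even s.card := by
  induction s using Finset.strongInduction with
  | _ s ihs =>
    rcases Finset.eq_empty_or_nonempty s with h | ⟨a, ha⟩
    · subst h; simp
    · have hja : j a ∈ s := h1 a ha
      have hne : j a ≠ a := h3 a ha
      set s' := (s.erase a).erase (j a) with hs'
      have hjas : j a ∈ s.erase a := Finset.mem_erase.mpr ⟨hne, hja⟩
      have hsub : s' ⊆ s := fun x hx =>
        Finset.mem_of_mem_erase (Finset.mem_of_mem_erase hx)
      have hnas' : a ∉ s' := by
        intro hcon
        exact (Finset.mem_erase.mp (Finset.mem_of_mem_erase hcon)).1 rfl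
      have hssub : s' ⊂ s := Finset.ssubset_iff_of_subset hsub |>.mpr ⟨a, ha, hnas'⟩
      have hxmem : ∀ x ∈ s', x ∈ s ∧ x ≠ a ∧ x ≠ j a := by
        intro x hx
        exact ⟨hsub hx, (Finset.mem_erase.mp (Finset.mem_of_mem_erase hx)).1,
          (Finset.mem_erase.mp hx).1⟩
      have h1' : ∀ x ∈ s', j x ∈ s' := by
        intro x hx
        obtain ⟨hxs, hxa, hxja⟩ := hxmem x hx
        refine Finset.mem_erase.mpr ⟨?_, Finset.mem_erase.mpr ⟨?_, h1 x hxs⟩⟩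
        · intro hcon
          exact hxa (by rw [← h2 x hxs, hcon, h2 a ha])
        · intro hcon
          exact hxja (by rw [← h2 x hxs, hcon])
      have hcard2 : 2 ≤ s.card := by
        have h1c : 1 ≤ (s.erase a).card := Finset.card_pos.mpr ⟨j a, hjas⟩
        have := Finset.card_erase_of_mem ha
        omega
      have hcard : s.card = s'.card + 2 := by
        rw [hs', Finset.card_erase_of_mem hjas, Finset.card_erase_of_mem ha]
        omega
      have heven : Even s'.card :=
        ihs s' hssub (fun x hx => h1' x hx) (fun x hx => h2 x (hsub hx))
          (fun x hx => h3 x (hsub hx))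
      rw [hcard]
      obtain ⟨k, hk⟩ := heven
      exact ⟨k + 1, by omega⟩

private lemma toTriples {V : Type*} :
    ∀ (l : List (Sym2 V × Sym2 V)), (∀ p ∈ l, ∃ c ∈ p.1, c ∈ p.2) →
    ∃ L : List (V × V × V),
      L.map (fun t => s(t.1, t.2.1)) = l.map Prod.fst ∧
      L.map (fun t => s(t.1, t.2.2)) = l.map Prod.snd := by
  intro l
  induction l with
  | nil => exact fun _ => ⟨[], rfl, rfl⟩
  | cons p l ihl =>
    intro hshare
    obtain ⟨L, hL1, hL2⟩ := ihl (fun q hq => hshare q (List.mem_cons_of_mem p hq))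
    obtain ⟨c, hc1, hc2⟩ := hshare p List.mem_cons_self
    obtain ⟨x, hx⟩ := Sym2.mem_iff_exists.mp hc1
    obtain ⟨y, hy⟩ := Sym2.mem_iff_exists.mp hc2
    exact ⟨(c, x, y) :: L, by simp [hL1, hx.symm], by simp [hL2, hy.symm]⟩

private lemma rel_pair_sum {V : Type*} {M M' : Multiset (V × V × V)}
    (h : Multiset.Rel (fun p q => q = p ∨ q = (p.1, p.2.2, p.2.1)) M M') :
    M'.map (fun t => s(t.1, t.2.1)) + M'.map (fun t => s(t.1, t.2.2)) =
    M.map (fun t => s(t.1, t.2.1)) + M.map (fun t => s(t.1, t.2.2)) := by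
  induction h with
  | zero => rfl
  | cons hpq hrel ihh =>
    rcases hpq with hq | hq <;> subst hq <;>
      simp only [Multiset.map_cons, Multiset.cons_add, Multiset.add_cons, Prod.fst, Prod.snd] <;>
      rw [ihh]
    exact Multiset.cons_swap _ _ _

private lemma card_filter_mem_sym2 {V : Type*} [Fintype V] [DecidableEq V]
    (e : Sym2 V) (hd : ¬ e.IsDiag) :
    (Finset.univ.filter (fun v => v ∈ e)).card = 2 := by
  induction e with
  | _ a b =>
    have hab : a ≠ b := by
      intro h; exact hd (by rw [h]; exact Sym2.isDiag_iff_proj_eq |>.mpr rfl)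
    have : Finset.univ.filter (fun v => v ∈ s(a, b)) = {a, b} := by
      ext v; simp [Sym2.mem_iff]
    rw [this, Finset.card_pair hab]

private lemma handshake {V : Type*} [Fintype V] [DecidableEq V]
    (F : Finset (Sym2 V)) (hd : ∀ e ∈ F, ¬ e.IsDiag) :
    ∑ v : V, (F.filter (fun e => v ∈ e)).card = 2 * F.card := by
  have h1 : ∀ v : V, (F.filter (fun e => v ∈ e)).card
      = ∑ e ∈ F, (if v ∈ e then 1 else 0) := by
    intro v; rw [Finset.card_filter]
  simp_rw [h1]
  rw [Finset.sum_comm]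
  have h2 : ∀ e ∈ F, ∑ v : V, (if v ∈ e then 1 else 0) = 2 := by
    intro e he
    rw [← Finset.card_filter]
    exact card_filter_mem_sym2 e (hd e he)
  rw [Finset.sum_congr rfl h2, Finset.sum_const, smul_eq_mul, mul_comm]
private lemma card_filter_map {α β : Type*} (f : α → β) (s : Multiset α)
    (p : β → Prop) [DecidablePred p] :
    Multiset.card (Multiset.filter p (s.map f)) =
      Multiset.card (s.filter (fun a => p (f a))) := by
  induction s using Multiset.induction with
  | empty => rfl
  | cons a s ih => by_cases h : p (f a) <;> simp [h, ih]

private lemma seb_of_even {V : Type*} [Fintype V] [DecidableEq V] (G : SimpleGraph V)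
    (hgconn : G.Connected) (hne : G.edgeSet.Nonempty) (heven : Even (Nat.card G.edgeSet)) :
    StronglyEdgeBalanced G := by
  classical
  haveI : Fintype G.edgeSet := Fintype.ofFinite _
  set E := G.edgeSet.toFinset with hE
  have hmemE : ∀ {e : Sym2 V}, e ∈ E ↔ e ∈ G.edgeSet := by
    intro e; rw [hE, Set.mem_toFinset]
  have hcardE : Nat.card G.edgeSet = E.card := by
    rw [Nat.card_eq_fintype_card, hE, Set.toFinset_card]
  have hdiagE : ∀ e ∈ E, ¬ e.IsDiag := fun e he =>
    G.not_isDiag_of_mem_edgeSet (hmemE.mp he)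
  have hreach : ∀ a b : V, Reach E a b := by
    intro a b
    obtain ⟨p⟩ := hgconn.preconnected a b
    induction p with
    | nil => exact Relation.ReflTransGen.refl
    | cons h p ih =>
      exact Relation.ReflTransGen.head (hmemE.mpr (G.mem_edgeSet.mpr h)) ih
  obtain ⟨e₀, he₀⟩ := hne
  have he₀E : e₀ ∈ E := hmemE.mpr he₀
  have hEcard1 : 1 ≤ E.card := Finset.card_pos.mpr ⟨e₀, he₀E⟩
  obtain ⟨l, r, hsum, hshare, hev, _⟩ :=
    pairing E.card E rfl hdiagE (fun a b _ _ => hreach a b) (Quot.out e₀).1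
      (fun _ => ⟨e₀, he₀E, Sym2.out_fst_mem e₀⟩)
  have hr : r = 0 := hev (by rw [← hcardE]; exact Nat.even_iff.mp heven)
  obtain ⟨L, hL0, hL1⟩ := toTriples l hshare
  obtain ⟨M', hrel, hbound⟩ := orient (L : Multiset (V × V × V))
  set m0 := M'.map (fun t => s(t.1, t.2.1)) with hm0
  set m1 := M'.map (fun t => s(t.1, t.2.2)) with hm1
  have hsplit : m0 + m1 = E.val := by
    rw [hr, add_zero] at hsum
    rw [hm0, hm1, rel_pair_sum hrel, Multiset.map_coe, Multiset.map_coe, hL0, hL1]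
    exact hsum
  have hnodup : (m0 + m1).Nodup := by rw [hsplit]; exact E.nodup
  rw [Multiset.nodup_add] at hnodup
  obtain ⟨hnd0, hnd1, hdisj01⟩ := hnodup
  set Z0 : Finset (Sym2 V) := ⟨m0, hnd0⟩ with hZ0
  set Z1 : Finset (Sym2 V) := ⟨m1, hnd1⟩ with hZ1
  have hmemZ0 : ∀ {x : Sym2 V}, x ∈ Z0 ↔ x ∈ m0 := by intro x; rfl
  have hmemZ1 : ∀ {x : Sym2 V}, x ∈ Z1 ↔ x ∈ m1 := by intro x; rfl
  have hsub0 : ∀ x ∈ Z0, x ∈ G.edgeSet := by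
    intro x hx
    have : x ∈ E.val := by rw [← hsplit]; exact Multiset.mem_add.mpr (Or.inl hx)
    exact hmemE.mp this
  have hsub1 : ∀ x ∈ Z1, x ∈ G.edgeSet := by
    intro x hx
    have : x ∈ E.val := by rw [← hsplit]; exact Multiset.mem_add.mpr (Or.inr hx)
    exact hmemE.mp this
  have hcover : ∀ {x : Sym2 V}, x ∈ E → x ∈ Z0 ∨ x ∈ Z1 := by
    intro x hx
    have : x ∈ m0 + m1 := by rw [hsplit]; exact hx
    exact Multiset.mem_add.mp this
  have hnotboth : ∀ {x : Sym2 V}, x ∈ Z0 → x ∉ Z1 := by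
    intro x hx hx1
    exact Multiset.disjoint_left.mp hdisj01 hx hx1
  have hZ0card : Z0.card = Multiset.card M' := by
    show Multiset.card m0 = _; rw [hm0, Multiset.card_map]
  have hZ1card : Z1.card = Multiset.card M' := by
    show Multiset.card m1 = _; rw [hm1, Multiset.card_map]
  have htotal : Z0.card + Z1.card = E.card := by
    show Multiset.card m0 + Multiset.card m1 = _
    rw [← Multiset.card_add, hsplit]; rfl
  -- the labeling
  set f : G.edgeSet → ZMod 2 := fun e => if (e : Sym2 V) ∈ Z0 then 0 else 1 with hf
  have hf0 : ∀ e : G.edgeSet, f e = 0 ↔ (e : Sym2 V) ∈ Z0 := by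
    intro e
    by_cases h : (e : Sym2 V) ∈ Z0 <;> simp [hf, h]
  have hf1 : ∀ e : G.edgeSet, f e = 1 ↔ (e : Sym2 V) ∈ Z1 := by
    intro e
    by_cases h : (e : Sym2 V) ∈ Z0
    · simp only [hf, if_pos h]
      constructor
      · intro h0; exact absurd h0.symm one_ne_zero
      · intro h1; exact absurd h1 (hnotboth h)
    · simp only [hf, if_neg h]
      have hE' : (e : Sym2 V) ∈ E := hmemE.mpr e.2
      rcases hcover hE' with h' | h'
      · exact absurd h' h
      · simp [h']
  -- edge counts
  have hec : ∀ (i : ZMod 2) (Z : Finset (Sym2 V)),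
      (∀ e : G.edgeSet, f e = i ↔ (e : Sym2 V) ∈ Z) → (∀ x ∈ Z, x ∈ G.edgeSet) →
      edgeCount G f i = Z.card := by
    intro i Z hiff hsub
    have : {e : G.edgeSet // f e = i} ≃ {x : Sym2 V // x ∈ Z} :=
      { toFun := fun e => ⟨(e.1 : Sym2 V), (hiff e.1).mp e.2⟩
        invFun := fun x => ⟨⟨x.1, hsub x.1 x.2⟩, (hiff _).mpr x.2⟩
        left_inv := fun e => Subtype.ext (Subtype.ext rfl)
        right_inv := fun x => rfl }
    rw [edgeCount, Nat.card_congr this, Nat.card_eq_fintype_card, Fintype.card_coe]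
  have hec0 : edgeCount G f 0 = Z0.card := hec 0 Z0 hf0 hsub0
  have hec1 : edgeCount G f 1 = Z1.card := hec 1 Z1 hf1 hsub1
  -- labeled degrees
  have hld : ∀ (i : ZMod 2) (Z : Finset (Sym2 V)),
      (∀ e : G.edgeSet, f e = i ↔ (e : Sym2 V) ∈ Z) → (∀ x ∈ Z, x ∈ G.edgeSet) →
      ∀ v : V, labDeg G f i v = (Z.filter (fun x => v ∈ x)).card := by
    intro i Z hiff hsub v
    have : {e : G.edgeSet // f e = i ∧ v ∈ (e : Sym2 V)}
        ≃ {x : Sym2 V // x ∈ Z.filter (fun x => v ∈ x)} :=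
      { toFun := fun e => ⟨(e.1 : Sym2 V),
          Finset.mem_filter.mpr ⟨(hiff e.1).mp e.2.1, e.2.2⟩⟩
        invFun := fun x => ⟨⟨x.1, hsub x.1 (Finset.mem_filter.mp x.2).1⟩,
          (hiff _).mpr (Finset.mem_filter.mp x.2).1, (Finset.mem_filter.mp x.2).2⟩
        left_inv := fun e => Subtype.ext (Subtype.ext rfl)
        right_inv := fun x => rfl }
    rw [labDeg, Nat.card_congr this, Nat.card_eq_fintype_card, Fintype.card_coe]
  have hld0 : ∀ v, labDeg G f 0 v = (Z0.filter (fun x => v ∈ x)).card := hld 0 Z0 hf0 hsub0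
  have hld1 : ∀ v, labDeg G f 1 v = (Z1.filter (fun x => v ∈ x)).card := hld 1 Z1 hf1 hsub1
  -- nondegeneracy of triples
  have hM'nd : ∀ t ∈ M', t.1 ≠ t.2.1 ∧ t.1 ≠ t.2.2 := by
    intro t ht
    constructor
    · intro hcon
      have : s(t.1, t.2.1) ∈ m0 := Multiset.mem_map_of_mem _ ht
      exact hdiagE _ (hsub0 _ this |> hmemE.mpr) (Sym2.mk_isDiag_iff.mpr hcon)
    · intro hcon
      have : s(t.1, t.2.2) ∈ m1 := Multiset.mem_map_of_mem _ ht
      exact hdiagE _ (hsub1 _ this |> hmemE.mpr) (Sym2.mk_isDiag_iff.mpr hcon)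
  -- degree formula
  have hdeg : ∀ (v : V) (g : V × V × V → V) (Z : Finset (Sym2 V)) (m : Multiset (Sym2 V)),
      Z.val = m → m = M'.map (fun t => s(t.1, g t)) → (∀ t ∈ M', t.1 ≠ g t) →
      (Z.filter (fun x => v ∈ x)).card
        = Multiset.card (M'.filter (fun t => v = t.1))
          + Multiset.card (M'.filter (fun t => v = g t)) := by
    intro v g Z m hZval hm hnd
    have h1 : (Z.filter (fun x => v ∈ x)).card
        = Multiset.card ((M'.map (fun t => s(t.1, g t))).filter (fun x => v ∈ x)) := by
      rw [Finset.card, Finset.filter_val, hZval, hm]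
    rw [h1, card_filter_map]
    have h2 : M'.filter (fun t => v ∈ s(t.1, g t))
        = M'.filter (fun t => v = t.1 ∨ v = g t) :=
      Multiset.filter_congr (fun t _ => by rw [Sym2.mem_iff])
    rw [h2]
    have h3 := Multiset.filter_add_filter (fun t : V × V × V => v = t.1)
      (fun t => v = g t) M'
    have h4 : M'.filter (fun t => (v = t.1) ∧ (v = g t)) = 0 := by
      rw [Multiset.filter_eq_nil]
      intro t ht ⟨ha, hb⟩
      exact hnd t ht (ha ▸ hb)
    have := congrArg Multiset.card h3
    rw [Multiset.card_add, Multiset.card_add, h4] at this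
    simp only [Multiset.card_zero, add_zero] at this
    omega
  have hdeg0 : ∀ v, (Z0.filter (fun x => v ∈ x)).card
      = Multiset.card (M'.filter (fun t => v = t.1))
        + Multiset.card (M'.filter (fun t => v = t.2.1)) :=
    fun v => hdeg v (fun t => t.2.1) Z0 m0 rfl hm0 (fun t ht => (hM'nd t ht).1)
  have hdeg1 : ∀ v, (Z1.filter (fun x => v ∈ x)).card
      = Multiset.card (M'.filter (fun t => v = t.1))
        + Multiset.card (M'.filter (fun t => v = t.2.2)) :=
    fun v => hdeg v (fun t => t.2.2) Z1 m1 rfl hm1 (fun t ht => (hM'nd t ht).2)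
  -- D values
  set D : V → ℤ := fun v =>
    ((Z0.filter (fun x => v ∈ x)).card : ℤ) - ((Z1.filter (fun x => v ∈ x)).card : ℤ)
    with hD
  have hDrange : ∀ v, D v = -1 ∨ D v = 0 ∨ D v = 1 := by
    intro v
    have hb := hbound v
    rw [Multiset.count_map, Multiset.count_map] at hb
    have hDv : D v = (Multiset.card (M'.filter (fun t => v = t.2.1)) : ℤ)
        - (Multiset.card (M'.filter (fun t => v = t.2.2)) : ℤ) := by
      simp only [hD]
      rw [hdeg0 v, hdeg1 v]
      push_cast
      ring
    rw [hDv] at *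
    omega
  -- sum of D is zero
  have hh : ∀ (Z : Finset (Sym2 V)), (∀ x ∈ Z, x ∈ G.edgeSet) →
      ∑ v : V, ((Z.filter (fun x => v ∈ x)).card : ℤ) = 2 * Z.card := by
    intro Z hsub
    have hhs := handshake Z (fun e he => G.not_isDiag_of_mem_edgeSet (hsub e he))
    rw [← Nat.cast_sum, hhs]
    push_cast
    ring
  have hsumD : ∑ v : V, D v = 0 := by
    rw [hD]
    rw [Finset.sum_sub_distrib, hh Z0 hsub0, hh Z1 hsub1, hZ0card, hZ1card]
    ring
  -- balanced vertex counts
  set S1 := Finset.univ.filter (fun v => D v = 1) with hS1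
  set Sm := Finset.univ.filter (fun v => D v = -1) with hSm
  have hcardbal : S1.card = Sm.card := by
    have e1 : ∑ v ∈ S1, D v = S1.card := by
      rw [Finset.sum_congr rfl (fun v hv => (Finset.mem_filter.mp hv).2)]
      simp [hS1]
    have hsplit1 := Finset.sum_filter_add_sum_filter_not Finset.univ
      (fun v => D v = 1) D
    have hsplit2 := Finset.sum_filter_add_sum_filter_not
      (Finset.univ.filter (fun v => ¬ D v = 1)) (fun v => D v = -1) D
    have hfilt : (Finset.univ.filter (fun v => ¬ D v = 1)).filter (fun v => D v = -1)
        = Sm := by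
      rw [Finset.filter_filter, hSm]
      exact Finset.filter_congr (fun v _ => ⟨fun h => h.2, fun h => ⟨by omega, h⟩⟩)
    have e2 : ∑ v ∈ Sm, D v = -(Sm.card : ℤ) := by
      rw [Finset.sum_congr rfl (fun v hv => (Finset.mem_filter.mp hv).2)]
      simp [hSm]
    have e3 : ∑ v ∈ (Finset.univ.filter (fun v => ¬ D v = 1)).filter
        (fun v => ¬ D v = -1), D v = 0 := by
      refine Finset.sum_eq_zero ?_
      intro v hv
      have h1 := (Finset.mem_filter.mp hv).2
      have h2 := (Finset.mem_filter.mp (Finset.mem_filter.mp hv).1).2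
      have h3 := hDrange v
      omega
    rw [hfilt, e2, e3] at hsplit2
    rw [← hS1] at hsplit1
    rw [e1, ← hsplit2, hsumD] at hsplit1
    omega
  -- identify vertexCount with S1 / Sm
  have h10 : (1 - 0 : ZMod 2) = 1 := by decide
  have h11 : (1 - 1 : ZMod 2) = 0 := by decide
  have hvc0 : vertexCount G f 0 = S1.card := by
    rw [vertexCount, h10, Nat.card_eq_fintype_card, Fintype.card_subtype, hS1]
    refine congrArg Finset.card (Finset.filter_congr ?_)
    intro v _
    rw [hld0 v, hld1 v]
    have h3 := hDrange v
    have hDv : D v = ((Z0.filter (fun x => v ∈ x)).card : ℤ)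
        - ((Z1.filter (fun x => v ∈ x)).card : ℤ) := rfl
    rw [hDv] at h3 ⊢
    omega
  have hvc1 : vertexCount G f 1 = Sm.card := by
    rw [vertexCount, h11, Nat.card_eq_fintype_card, Fintype.card_subtype, hSm]
    refine congrArg Finset.card (Finset.filter_congr ?_)
    intro v _
    rw [hld0 v, hld1 v]
    have h3 := hDrange v
    have hDv : D v = ((Z0.filter (fun x => v ∈ x)).card : ℤ)
        - ((Z1.filter (fun x => v ∈ x)).card : ℤ) := rfl
    rw [hDv] at h3 ⊢
    omega
  -- nonemptiness of both classes
  have hM'pos : 1 ≤ Multiset.card M' := by omega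
  have hZ0ne : ∃ x, x ∈ Z0 := Multiset.card_pos_iff_exists_mem.mp (by
    show 0 < Multiset.card m0
    rw [hm0, Multiset.card_map]; omega)
  have hZ1ne : ∃ x, x ∈ Z1 := Multiset.card_pos_iff_exists_mem.mp (by
    show 0 < Multiset.card m1
    rw [hm1, Multiset.card_map]; omega)
  obtain ⟨a0, ha0⟩ := hZ0ne
  obtain ⟨a1, ha1⟩ := hZ1ne
  refine ⟨f, ⟨?_, ?_⟩, ?_, ?_⟩
  · intro i
    rcases (by decide : ∀ j : ZMod 2, j = 0 ∨ j = 1) i with h | h <;> subst h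
    · exact ⟨⟨a0, hsub0 _ ha0⟩, (hf0 _).mpr ha0⟩
    · exact ⟨⟨a1, hsub1 _ ha1⟩, (hf1 _).mpr ha1⟩
  · rw [hec0, hec1, hZ0card, hZ1card]
    simp
  · rw [hvc0, hvc1, hcardbal]
  · rw [hec0, hec1, hZ0card, hZ1card]
private lemma even_of_seb {V : Type*} [Fintype V] (G : SimpleGraph V)
    (h : StronglyEdgeBalanced G) : Even (Nat.card G.edgeSet) := by
  classical
  obtain ⟨f, _, _, hee⟩ := h
  have h1 : ∀ e : G.edgeSet, ¬ f e = 0 ↔ f e = 1 := fun e => by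
    rcases (by decide : ∀ j : ZMod 2, j = 0 ∨ j = 1) (f e) with h | h <;> simp [h]
  have hsum : edgeCount G f 0 + edgeCount G f 1 = Nat.card G.edgeSet := by
    rw [edgeCount, edgeCount,
      Nat.card_congr (Equiv.subtypeEquivRight (fun e => (h1 e).symm)),
      ← Nat.card_sum, Nat.card_congr (Equiv.sumCompl _)]
  rw [← hsum, hee]
  exact ⟨edgeCount G f 1, rfl⟩

private lemma even_box_iff_lex {α β : Type*} [Fintype α] [Fintype β]
    (G : SimpleGraph α) (H : SimpleGraph β) :
    Even (Nat.card (G.boxProd H).edgeSet) ↔ Even (Nat.card (lexProd G H).edgeSet) := by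
  classical
  set A := (G.boxProd H).edgeSet with hA
  set B := (lexProd G H).edgeSet with hB
  have hle : G.boxProd H ≤ lexProd G H := by
    intro x y hxy
    rcases SimpleGraph.boxProd_adj.mp hxy with ⟨h1, h2⟩ | ⟨h1, h2⟩
    · exact (Or.inl h1 : G.Adj x.1 y.1 ∨ (x.1 = y.1 ∧ H.Adj x.2 y.2))
    · exact (Or.inr ⟨h2, h1⟩ : G.Adj x.1 y.1 ∨ (x.1 = y.1 ∧ H.Adj x.2 y.2))
  have hAB : A ⊆ B := SimpleGraph.edgeSet_mono hle
  set X := B \ A with hX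
  have hXchar : ∀ p q : α × β, (s(p, q) ∈ X ↔ G.Adj p.1 q.1 ∧ p.2 ≠ q.2) := by
    intro p q
    constructor
    · rintro ⟨hB', hA'⟩
      have hB'' : G.Adj p.1 q.1 ∨ (p.1 = q.1 ∧ H.Adj p.2 q.2) := (lexProd G H).mem_edgeSet.mp hB'
      have hA'' : ¬ (G.boxProd H).Adj p q := fun hcon =>
        hA' ((G.boxProd H).mem_edgeSet.mpr hcon)
      rcases hB'' with h1 | ⟨h1, h2⟩
      · refine ⟨h1, fun h2 => hA'' (SimpleGraph.boxProd_adj.mpr (Or.inl ⟨h1, h2⟩))⟩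
      · exact absurd (SimpleGraph.boxProd_adj.mpr (Or.inr ⟨h2, h1⟩)) hA''
    · rintro ⟨h1, h2⟩
      refine ⟨(lexProd G H).mem_edgeSet.mpr (Or.inl h1 : G.Adj p.1 q.1 ∨ (p.1 = q.1 ∧ H.Adj p.2 q.2)), fun hA' => ?_⟩
      rcases SimpleGraph.boxProd_adj.mp ((G.boxProd H).mem_edgeSet.mp hA')
        with ⟨_, h4⟩ | ⟨_, h4⟩
      · exact h2 h4
      · exact G.loopless.irrefl _ (h4 ▸ h1)
  set j : Sym2 (α × β) → Sym2 (α × β) :=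
    Sym2.lift ⟨fun p q => s((p.1, q.2), (q.1, p.2)), fun p q => Sym2.eq_swap⟩ with hj
  have hjmk : ∀ p q : α × β, j s(p, q) = s((p.1, q.2), (q.1, p.2)) := fun p q => rfl
  have hXfin : X.Finite := Set.toFinite X
  set Xf := hXfin.toFinset with hXf
  have hmemXf : ∀ {x}, x ∈ Xf ↔ x ∈ X := fun {x} => hXfin.mem_toFinset
  have hxeven : Even Xf.card := by
    refine even_card_of_invol Xf j ?_ ?_ ?_
    · intro x hx
      induction x with
      | _ p q =>
        obtain ⟨h1, h2⟩ := (hXchar p q).mp (hmemXf.mp hx)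
        rw [hjmk]
        exact hmemXf.mpr ((hXchar _ _).mpr ⟨h1, fun hcon => h2 hcon.symm⟩)
    · intro x _
      induction x with
      | _ p q => rw [hjmk, hjmk]
    · intro x hx
      induction x with
      | _ p q =>
        obtain ⟨h1, h2⟩ := (hXchar p q).mp (hmemXf.mp hx)
        rw [hjmk]
        intro hcon
        rw [Sym2.eq_iff] at hcon
        rcases hcon with ⟨hc1, _⟩ | ⟨hc1, hc2⟩
        · exact h2 ((Prod.ext_iff.mp hc1).2).symm
        · exact G.loopless.irrefl _ (((Prod.ext_iff.mp hc1).1) ▸ h1)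
  have hcard : B.ncard = A.ncard + X.ncard := by
    conv_lhs => rw [← Set.union_diff_cancel hAB]
    rw [← hX]
    exact Set.ncard_union_eq Set.disjoint_sdiff_right (Set.toFinite _) (Set.toFinite _)
  have hXcard : X.ncard = Xf.card := Set.ncard_eq_toFinset_card X hXfin
  rw [Nat.card_coe_set_eq, Nat.card_coe_set_eq, hcard, hXcard]
  obtain ⟨k, hk⟩ := hxeven
  rw [hk, Nat.even_iff, Nat.even_iff]
  omega

theorem boxProd_stronglyEdgeBalanced_iff_lexProd {α β : Type*} [Fintype α] [Fintype β]
    (G : SimpleGraph α) (H : SimpleGraph β)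
    (hconnBox : (G.boxProd H).Connected) (hconnLex : (lexProd G H).Connected)
    (heBox : (G.boxProd H).edgeSet.Nonempty) (heLex : (lexProd G H).edgeSet.Nonempty) :
    StronglyEdgeBalanced (G.boxProd H) ↔ StronglyEdgeBalanced (lexProd G H) := by
  classical
  constructor
  · intro h
    exact seb_of_even _ hconnLex heLex ((even_box_iff_lex G H).mp (even_of_seb _ h))
  · intro h
    exact seb_of_even _ hconnBox heBox ((even_box_iff_lex G H).mpr (even_of_seb _ h))
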